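/- Let k ≥ 2, let ℓ, m be positive integers with ℓ ≤ m, and fix a string u ∈ [k]^m. The number of strings v ∈ [k]^m whose longest common subsequence with u has length at least ℓ is at most C(m, ℓ)²·k^{m−ℓ}, where C(a,b) denotes the binomial coefficient. (Key counting step in the proof of Theorem 2.4 of the paper: u has at most C(m,ℓ) subsequences of length ℓ, and each is contained in at most k^{m−ℓ}·C(m,ℓ) strings of [k]^m.) -/
import Mathlib


/-- `s` (of length `ℓ`) is a subsequence of `t` (of length `m`): there are indices
`i₁ < ⋯ < i_ℓ` with `t (i_j) = s j` for all `j`. -/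
def IsSubseq {α : Type*} {ℓ m : ℕ} (s : Fin ℓ → α) (t : Fin m → α) : Prop :=
  ∃ f : Fin ℓ → Fin m, StrictMono f ∧ ∀ j, t (f j) = s j

lemma orderEmbOfFin_congr {α : Type*} [LinearOrder α] {ℓ : ℕ} (s t : Finset α) (h : s = t)
    (hs : s.card = ℓ) (ht : t.card = ℓ) :
    ⇑(s.orderEmbOfFin hs) = ⇑(t.orderEmbOfFin ht) := by subst h; rfl

/-- Let `k ≥ 2`, `1 ≤ ℓ ≤ m`, and fix `u ∈ [k]^m`. The number of strings `v ∈ [k]^m`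
whose longest common subsequence with `u` has length at least `ℓ` (i.e., such that some
string of length `ℓ` is a common subsequence of `u` and `v`) is at most
`C(m, ℓ)² k^{m-ℓ}`. -/
theorem count_large_lcs (k ℓ m : ℕ) (hk : 2 ≤ k) (hℓ : 0 < ℓ) (hℓm : ℓ ≤ m)
    (u : Fin m → Fin k) :
    {v : Fin m → Fin k | ∃ s : Fin ℓ → Fin k, IsSubseq s u ∧ IsSubseq s v}.ncard ≤
      m.choose ℓ ^ 2 * k ^ (m - ℓ) := by
  classical
  set S := {v : Fin m → Fin k | ∃ s : Fin ℓ → Fin k, IsSubseq s u ∧ IsSubseq s v} with hSdef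
  have hchoice : ∀ v : S, ∃ (A : Finset (Fin m)) (B : Finset (Fin m)) (hA : A.card = ℓ)
      (hB : B.card = ℓ), ∀ j : Fin ℓ,
        (v : Fin m → Fin k) (B.orderEmbOfFin hB j) = u (A.orderEmbOfFin hA j) := by
    rintro ⟨v, s, ⟨f, hfmono, hfu⟩, ⟨g, hgmono, hgv⟩⟩
    refine ⟨Finset.univ.image f, Finset.univ.image g, ?_, ?_, ?_⟩
    · rw [Finset.card_image_of_injective _ hfmono.injective, Finset.card_univ,
        Fintype.card_fin]
    · rw [Finset.card_image_of_injective _ hgmono.injective, Finset.card_univ,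
        Fintype.card_fin]
    · intro j
      have hf : f = (Finset.univ.image f).orderEmbOfFin (by
          rw [Finset.card_image_of_injective _ hfmono.injective, Finset.card_univ,
            Fintype.card_fin]) :=
        Finset.orderEmbOfFin_unique _ (fun x => Finset.mem_image_of_mem f (Finset.mem_univ x))
          hfmono
      have hg : g = (Finset.univ.image g).orderEmbOfFin (by
          rw [Finset.card_image_of_injective _ hgmono.injective, Finset.card_univ,
            Fintype.card_fin]) :=
        Finset.orderEmbOfFin_unique _ (fun x => Finset.mem_image_of_mem g (Finset.mem_univ x))
          hgmono
      rw [← hf, ← hg]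
      exact (hgv j).trans (hfu j).symm
  choose A B hA hB hAB using hchoice
  have hBc : ∀ v : S, ((B v)ᶜ).card = m - ℓ := by
    intro v
    rw [Finset.card_compl, hB, Fintype.card_fin]
  let φ : S → ({A : Finset (Fin m) // A.card = ℓ} × {B : Finset (Fin m) // B.card = ℓ} ×
    (Fin (m - ℓ) → Fin k)) := fun v =>
    (⟨A v, hA v⟩, ⟨B v, hB v⟩, fun i => (v : Fin m → Fin k) (((B v)ᶜ).orderEmbOfFin (hBc v) i))
  have hinj : Function.Injective φ := by
    intro v₁ v₂ heq
    have h1 : A v₁ = A v₂ := congrArg (fun p : ({A : Finset (Fin m) // A.card = ℓ} × {B : Finset (Fin m) // B.card = ℓ} × (Fin (m - ℓ) → Fin k)) => (p.1 : Finset (Fin m))) heq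
    have h2 : B v₁ = B v₂ := congrArg (fun p : ({A : Finset (Fin m) // A.card = ℓ} × {B : Finset (Fin m) // B.card = ℓ} × (Fin (m - ℓ) → Fin k)) => (p.2.1 : Finset (Fin m))) heq
    have h3 : ∀ i : Fin (m - ℓ),
        (v₁ : Fin m → Fin k) (((B v₁)ᶜ).orderEmbOfFin (hBc v₁) i) =
        (v₂ : Fin m → Fin k) (((B v₂)ᶜ).orderEmbOfFin (hBc v₂) i) :=
      fun i => congrFun (congrArg (fun p : ({A : Finset (Fin m) // A.card = ℓ} × {B : Finset (Fin m) // B.card = ℓ} × (Fin (m - ℓ) → Fin k)) => p.2.2) heq) i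
    apply Subtype.ext
    funext x
    by_cases hx : x ∈ B v₁
    · have : x ∈ Set.range ((B v₁).orderEmbOfFin (hB v₁)) := by
        rw [Finset.range_orderEmbOfFin]; exact hx
      obtain ⟨j, hj⟩ := this
      have e2 := orderEmbOfFin_congr (B v₁) (B v₂) h2 (hB v₁) (hB v₂)
      have e1 := orderEmbOfFin_congr (A v₁) (A v₂) h1 (hA v₁) (hA v₂)
      calc (v₁ : Fin m → Fin k) x = u ((A v₁).orderEmbOfFin (hA v₁) j) := by
            rw [← hj, hAB v₁ j]
        _ = u ((A v₂).orderEmbOfFin (hA v₂) j) := by rw [congrFun e1 j]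
        _ = (v₂ : Fin m → Fin k) ((B v₂).orderEmbOfFin (hB v₂) j) := (hAB v₂ j).symm
        _ = (v₂ : Fin m → Fin k) x := by rw [← congrFun e2 j, hj]
    · have : x ∈ Set.range (((B v₁)ᶜ).orderEmbOfFin (hBc v₁)) := by
        rw [Finset.range_orderEmbOfFin]; simpa using hx
      obtain ⟨i, hi⟩ := this
      have ec := orderEmbOfFin_congr ((B v₁)ᶜ) ((B v₂)ᶜ) (by rw [h2]) (hBc v₁) (hBc v₂)
      calc (v₁ : Fin m → Fin k) x
          = (v₁ : Fin m → Fin k) (((B v₁)ᶜ).orderEmbOfFin (hBc v₁) i) := by rw [hi]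
        _ = (v₂ : Fin m → Fin k) (((B v₂)ᶜ).orderEmbOfFin (hBc v₂) i) := h3 i
        _ = (v₂ : Fin m → Fin k) x := by rw [← congrFun ec i, hi]
  have hle := Nat.card_le_card_of_injective φ hinj
  have hT : Nat.card ({A : Finset (Fin m) // A.card = ℓ} × {B : Finset (Fin m) // B.card = ℓ} ×
      (Fin (m - ℓ) → Fin k)) = m.choose ℓ ^ 2 * k ^ (m - ℓ) := by
    rw [Nat.card_eq_fintype_card]
    simp [Fintype.card_finset_len, sq, mul_assoc]
  rw [← Nat.card_coe_set_eq, ← hT]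
  exact hle
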